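/- Let λ > 0, Δx > 0, P̄ > 0, ν > 0 and N0 > 0 be real numbers, set θ = λ/(2Δx) and P = Δx·P̄, and for f ∈ ℝ let N_θ(f) = #{k ∈ ℤ : |f − kθ| < 1/2}. If 1/θ is a positive integer, then (1/θ) · ∫_{−θ/2}^{θ/2} log( 1 + (Pν/N0)·θ·N_θ(f) ) df = log( 1 + Pν/N0 ). -/

import Mathlib

open Real MeasureTheory

lemma count_eq_aux (n : ℕ) (hn : 0 < n) (θ f : ℝ) (hθ : (n:ℝ) * θ = 1)
    (hb : ∀ m : ℤ, (n:ℝ) * f + n / 2 ≠ (m:ℝ)) :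
    ({k : ℤ | |f - k * θ| < 1 / 2}.ncard : ℝ) = (n : ℝ) := by
  have hnR : (0:ℝ) < n := by exact_mod_cast hn
  set a : ℝ := (n:ℝ) * f - n / 2 with ha
  set b : ℝ := (n:ℝ) * f + n / 2 with hbdef
  have hset : {k : ℤ | |f - k * θ| < 1 / 2} = ↑(Finset.Ioo ⌊a⌋ ⌈b⌉) := by
    ext k
    simp only [Set.mem_setOf_eq, Finset.coe_Ioo, Set.mem_Ioo, abs_lt]
    rw [Int.floor_lt, Int.lt_ceil]
    have hk : (n:ℝ) * ((k:ℝ) * θ) = (k:ℝ) := by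
      calc (n:ℝ) * ((k:ℝ) * θ) = (k:ℝ) * ((n:ℝ) * θ) := by ring
      _ = k := by rw [hθ]; ring
    constructor
    · rintro ⟨h1, h2⟩
      constructor
      · rw [ha]; nlinarith
      · rw [hbdef]; nlinarith
    · rintro ⟨h1, h2⟩
      rw [ha] at h1; rw [hbdef] at h2
      constructor
      · nlinarith
      · nlinarith
  rw [hset, Set.ncard_coe_finset, Int.card_Ioo]
  have hfb : (⌊b⌋ : ℝ) < b := lt_of_le_of_ne (Int.floor_le b) (fun h => hb ⌊b⌋ h.symm)
  have hceil : ⌈b⌉ = ⌊b⌋ + 1 :=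
    le_antisymm (Int.ceil_le_floor_add_one b) (by exact_mod_cast Int.lt_ceil.mpr hfb)
  have hfa : ⌊a⌋ = ⌊b⌋ - n := by
    have : a = b - (n:ℕ) := by rw [ha, hbdef]; push_cast; ring
    rw [this, Int.floor_sub_natCast]
  rw [hceil, hfa]
  have : (⌊b⌋ + 1 - (⌊b⌋ - (n:ℤ)) - 1) = (n:ℤ) := by ring
  rw [this]
  simp

theorem capacity_interference_free_1D (lam Δx Pbar ν N0 : ℝ)
    (hlam : 0 < lam) (hΔx : 0 < Δx) (hP : 0 < Pbar) (hν : 0 < ν) (hN0 : 0 < N0)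
    (hint : ∃ n : ℕ, 0 < n ∧ 1 / (lam / (2 * Δx)) = (n : ℝ)) :
    let θ := lam / (2 * Δx)
    let P := Δx * Pbar
    (1 / θ) * (∫ f in (-(θ / 2))..(θ / 2),
        Real.log (1 + (P * ν / N0) * θ * (({k : ℤ | |f - k * θ| < 1 / 2}.ncard : ℕ) : ℝ)))
      = Real.log (1 + P * ν / N0) := by
  obtain ⟨n, hn, hne⟩ := hint
  intro θ P
  have hθ : 0 < θ := div_pos hlam (by linarith)
  have hnR : (0:ℝ) < n := by exact_mod_cast hn
  have hnθ : (n:ℝ) * θ = 1 := by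
    have : 1 / θ = (n:ℝ) := hne
    field_simp at this
    linarith
  set c : ℝ := P * ν / N0 with hc
  -- bad set has measure zero
  have hbad : volume {f : ℝ | ∃ m : ℤ, (n:ℝ) * f + n / 2 = (m:ℝ)} = 0 := by
    have hsub : {f : ℝ | ∃ m : ℤ, (n:ℝ) * f + n / 2 = (m:ℝ)} ⊆
        Set.range (fun m : ℤ => ((m:ℝ) - n / 2) / n) := by
      rintro f ⟨m, hm⟩
      exact ⟨m, by field_simp; linarith⟩
    exact measure_mono_null hsub (Set.Countable.measure_zero (Set.countable_range _) _)
  have hae : ∀ᵐ f : ℝ, Real.log (1 + c * θ * (({k : ℤ | |f - k * θ| < 1 / 2}.ncard : ℕ) : ℝ))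
      = Real.log (1 + c) := by
    rw [← MeasureTheory.compl_mem_ae_iff] at hbad
    filter_upwards [hbad] with f hf
    have hb : ∀ m : ℤ, (n:ℝ) * f + n / 2 ≠ (m:ℝ) := by
      intro m hm; exact hf ⟨m, hm⟩
    rw [count_eq_aux n hn θ f hnθ hb]
    congr 1
    have : c * θ * n = c * ((n:ℝ) * θ) := by ring
    rw [this, hnθ, mul_one]
  have hint : (∫ f in (-(θ / 2))..(θ / 2),
      Real.log (1 + c * θ * (({k : ℤ | |f - k * θ| < 1 / 2}.ncard : ℕ) : ℝ)))
      = ∫ _ in (-(θ / 2))..(θ / 2), Real.log (1 + c) := by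
    apply intervalIntegral.integral_congr_ae
    filter_upwards [hae] with f hf _
    exact hf
  rw [hint, intervalIntegral.integral_const, smul_eq_mul]
  have : θ / 2 - -(θ / 2) = θ := by ring
  rw [this]
  field_simp
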